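/- Let T^1, …, T^{r−1} ∈ K be such that the Laurent series x − k − (1/r)·Σ_{β=1}^{r−1} T^β·k^{−(r−β)} lies in y^r·K[[y]] (this is the defining expansion of the flat coordinates T^β of the Saito Frobenius manifold of the A_{r−1}-singularity). Then v_α = −(α/r)·T^{r−α} for every 1 ≤ α ≤ r−1. -/

import Mathlib

open scoped BigOperators

open PowerSeries HahnSeries in
private lemma auxFlat_ops_coeff {K : Type*} [Field K] (p : PowerSeries K) (n : ℤ) :
    (HahnSeries.ofPowerSeries ℤ K p).coeff n =
      if n < 0 then 0 else PowerSeries.coeff n.natAbs p := by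
  simpa using PowerSeries.coeff_coe p n

open PowerSeries HahnSeries in
private lemma auxFlat_coeff {K : Type*} [Field K] (a : ℤ) (c : K) (p : PowerSeries K) (n : ℤ) :
    (HahnSeries.single a c * HahnSeries.ofPowerSeries ℤ K p).coeff n =
      if n - a < 0 then 0 else c * PowerSeries.coeff (n - a).natAbs p := by
  have h : n = (n - a) + a := by ring
  nth_rewrite 1 [h]
  rw [HahnSeries.coeff_single_mul_add, auxFlat_ops_coeff]
  split_ifs <;> simp

open PowerSeries HahnSeries in
private lemma auxFlat_pos {K : Type*} [Field K] (a : ℤ) (c : K) (p : PowerSeries K) (n : ℤ)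
    (N : ℕ) (hN : n = a + N) :
    (HahnSeries.single a c * HahnSeries.ofPowerSeries ℤ K p).coeff n =
      c * PowerSeries.coeff N p := by
  rw [auxFlat_coeff, if_neg (by omega)]
  have h : (n - a).natAbs = N := by omega
  rw [h]

open PowerSeries HahnSeries in
private lemma auxFlat_neg {K : Type*} [Field K] (a : ℤ) (c : K) (p : PowerSeries K) (n : ℤ)
    (hN : n < a) :
    (HahnSeries.single a c * HahnSeries.ofPowerSeries ℤ K p).coeff n = 0 := by
  rw [auxFlat_coeff, if_pos (by omega)]

open PowerSeries HahnSeries in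
private lemma auxFlat2 {K : Type*} [Field K] (a b : ℤ) (c e : K) (p q : PowerSeries K) :
    (HahnSeries.single a c * HahnSeries.ofPowerSeries ℤ K p)
      * (HahnSeries.single b e * HahnSeries.ofPowerSeries ℤ K q)
    = HahnSeries.single (a + b) (c * e) * HahnSeries.ofPowerSeries ℤ K (p * q) := by
  rw [mul_mul_mul_comm, HahnSeries.single_mul_single, ← map_mul]

open PowerSeries HahnSeries in
private lemma auxFlat3 {K : Type*} [Field K] (a b : ℤ) (c e : K) (q : PowerSeries K) :
    (HahnSeries.single a c) * (HahnSeries.single b e * HahnSeries.ofPowerSeries ℤ K q)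
    = HahnSeries.single (a + b) (c * e) * HahnSeries.ofPowerSeries ℤ K q := by
  rw [← mul_assoc, HahnSeries.single_mul_single]

private lemma auxFlat_sum_coeff {K : Type*} [Field K] {ι : Type*} (s : Finset ι)
    (f : ι → LaurentSeries K) (n : ℤ) :
    (∑ i ∈ s, f i).coeff n = ∑ i ∈ s, (f i).coeff n := by
  classical
  induction s using Finset.cons_induction with
  | empty => simp
  | cons i s hi ih => rw [Finset.sum_cons, Finset.sum_cons, HahnSeries.coeff_add, ih]

private lemma auxFlat_mul_coeff_zero {K : Type*} [Field K] {x y : LaurentSeries K} {n : ℤ}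
    (h : ∀ i j : ℤ, i + j = n → x.coeff i = 0 ∨ y.coeff j = 0) :
    (x * y).coeff n = 0 := by
  rw [HahnSeries.coeff_mul]
  apply Finset.sum_eq_zero
  intro ij hij
  rw [Finset.mem_addAntidiagonal] at hij
  rcases h ij.1 ij.2 hij.2.2 with h' | h' <;> simp [h']

open PowerSeries in
private lemma auxFlat_key {K : Type*} [Field K] [CharZero K] (u : PowerSeries K) (j : ℕ)
    (hj : 1 ≤ j) :
    PowerSeries.coeff j (u ^ j)
      = PowerSeries.coeff (j - 1) (u ^ (j - 1) * (d⁄dX K) u) := by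
  have h1 : (d⁄dX K) (u ^ j) = j • (u ^ (j-1) * (d⁄dX K) u) := by
    rw [Derivation.leibniz_pow, smul_eq_mul]
  have h2 := PowerSeries.coeff_derivative (u ^ j) (j - 1)
  rw [h1, map_nsmul] at h2
  have hj1 : j - 1 + 1 = j := by omega
  rw [hj1] at h2
  have hjK : ((j : K)) ≠ 0 := Nat.cast_ne_zero.mpr (by omega)
  have h3 : (j : K) * PowerSeries.coeff (j-1) (u ^ (j-1) * (d⁄dX K) u)
      = PowerSeries.coeff j (u ^ j) * (j : K) := by
    simpa [nsmul_eq_mul, Nat.cast_sub hj, sub_add_cancel] using h2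
  rw [mul_comm] at h3
  exact (mul_right_cancel₀ hjK h3.symm)

theorem flat_coordinates_of_A_singularity
    (K : Type*) [Field K] [CharZero K] (r : ℕ) (hr : 2 ≤ r)
    (s : ℕ → K) (u : PowerSeries K)
    (hu1 : PowerSeries.constantCoeff u = 1)
    (hur : u ^ r = 1 + ∑ i ∈ Finset.range (r - 1),
        PowerSeries.C (s i) * PowerSeries.X ^ (r - i))
    (k : LaurentSeries K)
    (hk : k = HahnSeries.single (-1 : ℤ) (1 : K) * HahnSeries.ofPowerSeries ℤ K u)
    (v : ℕ → K) (hv : ∀ α : ℕ, v α = (k ^ α).coeff 1)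
    (T : ℕ → K)
    (hT : ∀ n : ℤ, n < (r : ℤ) →
      (HahnSeries.single (-1 : ℤ) (1 : K) - k
        - HahnSeries.C ((r : K))⁻¹ *
            ∑ β ∈ Finset.Icc 1 (r - 1),
              HahnSeries.C (T β) * k ^ (-((r : ℤ) - (β : ℤ)))).coeff n = 0) :
    ∀ α : ℕ, 1 ≤ α → α ≤ r - 1 → v α = -((α : K) / (r : K)) * T (r - α) := by
  intro α hα1 hα2
  open PowerSeries HahnSeries in
  have hαr : α < r := by omega
  have hrK : (r : K) ≠ 0 := Nat.cast_ne_zero.mpr (by omega)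
  have hu0 : PowerSeries.constantCoeff u ≠ 0 := by rw [hu1]; exact one_ne_zero
  have huw : u * u⁻¹ = 1 := PowerSeries.mul_inv_cancel u hu0
  have hwu : ∀ m : ℕ, u⁻¹ ^ m * u ^ m = 1 := by
    intro m
    rw [← mul_pow, mul_comm, huw, one_pow]
  have hkpow : ∀ m : ℕ, k ^ m
      = HahnSeries.single (-(m:ℤ)) 1 * HahnSeries.ofPowerSeries ℤ K (u ^ m) := by
    intro m
    rw [hk, mul_pow, HahnSeries.single_pow, one_pow, map_pow]
    congr 2
    simp
  have hkinv : k⁻¹ = HahnSeries.single (1:ℤ) 1 * HahnSeries.ofPowerSeries ℤ K u⁻¹ := by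
    refine inv_eq_of_mul_eq_one_right ?_
    rw [hk, mul_mul_mul_comm, HahnSeries.single_mul_single, ← map_mul, huw]
    simp [← HahnSeries.single_zero_one]
  have hkzpow : ∀ m : ℕ, k ^ (-(m:ℤ))
      = HahnSeries.single (m:ℤ) 1 * HahnSeries.ofPowerSeries ℤ K (u⁻¹ ^ m) := by
    intro m
    rw [zpow_neg, zpow_natCast, ← inv_pow, hkinv, mul_pow, HahnSeries.single_pow, one_pow,
      map_pow]
    congr 2
    simp
  -- the derivative of k^α, encoded by hand
  set A : PowerSeries K := u ^ α with hA
  set Dk : LaurentSeries K :=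
    HahnSeries.single (-(α:ℤ)-1) (-(α:K)) * HahnSeries.ofPowerSeries ℤ K A
    + HahnSeries.single (-(α:ℤ)) 1 * HahnSeries.ofPowerSeries ℤ K ((d⁄dX K) A) with hDk
  have hdA : (d⁄dX K) A = α • (u ^ (α-1) * (d⁄dX K) u) := by
    rw [hA, Derivation.leibniz_pow, smul_eq_mul]
  have hDks : ∀ n : ℤ, n < -(α:ℤ) - 1 → Dk.coeff n = 0 := by
    intro n hn
    rw [hDk, HahnSeries.coeff_add, auxFlat_neg _ _ _ _ (by omega),
      auxFlat_neg _ _ _ _ (by omega), add_zero]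
  -- the main vanishing from hT
  have h0 : ((HahnSeries.single (-1 : ℤ) (1 : K) - k
        - HahnSeries.C ((r : K))⁻¹ *
            ∑ β ∈ Finset.Icc 1 (r - 1),
              HahnSeries.C (T β) * k ^ (-((r : ℤ) - (β : ℤ)))) * Dk).coeff (-1) = 0 := by
    apply auxFlat_mul_coeff_zero
    intro i j hij
    by_cases hi : i < (r : ℤ)
    · exact Or.inl (hT i hi)
    · exact Or.inr (hDks j (by omega))
  -- piece 1 : single (-1) 1 * Dk
  have hvα : v α = PowerSeries.coeff (α+1) A := by
    rw [hv, hkpow α, auxFlat_pos _ _ _ _ (α+1) (by omega)]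
    rw [one_mul]
  have p1 : (HahnSeries.single (-1:ℤ) (1:K) * Dk).coeff (-1) = v α := by
    rw [hDk, mul_add, HahnSeries.coeff_add, auxFlat3, auxFlat3,
      auxFlat_pos _ _ _ _ (α+1) (by omega), auxFlat_pos _ _ _ _ α (by omega),
      PowerSeries.coeff_derivative, hvα]
    push_cast
    ring
  -- piece 2 : k * Dk
  have hk1 : PowerSeries.coeff (α+1) (u ^ (α+1))
      = PowerSeries.coeff α (u ^ α * (d⁄dX K) u) := by
    simpa using auxFlat_key u (α+1) (by omega)
  have p2 : (k * Dk).coeff (-1) = 0 := by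
    rw [hk, hDk, mul_add, HahnSeries.coeff_add, auxFlat2, auxFlat2,
      auxFlat_pos _ _ _ _ (α+1) (by omega), auxFlat_pos _ _ _ _ α (by omega)]
    have e1 : u * A = u ^ (α+1) := by
      rw [hA, ← pow_succ']
    have e2 : u * (d⁄dX K) A = α • (u ^ α * (d⁄dX K) u) := by
      rw [hdA, mul_smul_comm, ← mul_assoc]
      congr 2
      rw [← pow_succ']
      congr 1
      omega
    rw [e1, e2, map_nsmul, hk1, nsmul_eq_mul]
    ring
  -- piece 3 : the sum terms
  have hterm : ∀ β ∈ Finset.Icc 1 (r-1),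
      (k ^ (-((r:ℤ) - (β:ℤ))) * Dk).coeff (-1) = if β = r - α then -(α:K) else 0 := by
    intro β hβ
    rw [Finset.mem_Icc] at hβ
    set m : ℕ := r - β with hm
    have hexp : -((r:ℤ) - (β:ℤ)) = -(m:ℤ) := by omega
    rw [hexp, hkzpow m, hDk, mul_add, HahnSeries.coeff_add, auxFlat2, auxFlat2]
    rcases lt_trichotomy m α with hmα | hmα | hmα
    · -- m < α : the two contributions cancel
      rw [if_neg (by omega)]
      rw [auxFlat_pos _ _ _ _ (α - m) (by omega), auxFlat_pos _ _ _ _ (α - m - 1) (by omega)]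
      have e1 : u⁻¹ ^ m * A = u ^ (α - m) := by
        rw [hA, show u ^ α = u ^ (α - m) * u ^ m by rw [← _root_.pow_add]; congr 1; omega,
          mul_left_comm, hwu, mul_one]
      have e2 : u⁻¹ ^ m * (d⁄dX K) A = α • (u ^ (α - m - 1) * (d⁄dX K) u) := by
        rw [hdA, mul_smul_comm, ← mul_assoc]
        congr 2
        rw [show u ^ (α - 1) = u ^ (α - m - 1) * u ^ m by rw [← _root_.pow_add]; congr 1; omega,
          mul_left_comm, hwu, mul_one]
      have e3 : PowerSeries.coeff (α - m) (u ^ (α - m))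
          = PowerSeries.coeff (α - m - 1) (u ^ (α - m - 1) * (d⁄dX K) u) := by
        exact auxFlat_key u (α - m) (by omega)
      rw [e1, e2, map_nsmul, ← e3, nsmul_eq_mul]
      ring
    · -- m = α
      rw [if_pos (by omega)]
      rw [auxFlat_pos _ _ _ _ 0 (by omega), auxFlat_neg _ _ _ _ (by omega)]
      have e1 : u⁻¹ ^ m * A = 1 := by rw [hA, ← hmα, hwu]
      rw [e1]
      simp
    · -- m > α : everything vanishes
      rw [if_neg (by omega)]
      rw [auxFlat_neg _ _ _ _ (by omega), auxFlat_neg _ _ _ _ (by omega), add_zero]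
  have p3 : ((HahnSeries.C ((r:K))⁻¹ *
        ∑ β ∈ Finset.Icc 1 (r-1),
          HahnSeries.C (T β) * k ^ (-((r:ℤ) - (β:ℤ)))) * Dk).coeff (-1)
      = (r:K)⁻¹ * (T (r-α) * -(α:K)) := by
    rw [mul_assoc, Finset.sum_mul, HahnSeries.C_apply, HahnSeries.coeff_single_zero_mul,
      auxFlat_sum_coeff]
    congr 1
    have step : ∀ β ∈ Finset.Icc 1 (r-1),
        ((HahnSeries.C (T β) * k ^ (-((r:ℤ) - (β:ℤ)))) * Dk).coeff (-1)
          = if β = r - α then T β * -(α:K) else 0 := by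
      intro β hβ
      rw [mul_assoc, HahnSeries.C_apply, HahnSeries.coeff_single_zero_mul, hterm β hβ]
      split_ifs <;> simp
    rw [Finset.sum_congr rfl step, Finset.sum_ite_eq' (Finset.Icc 1 (r-1)) (r - α)]
    rw [if_pos (Finset.mem_Icc.mpr ⟨by omega, by omega⟩)]
  -- assemble
  have hfinal : v α - 0 - (r:K)⁻¹ * (T (r-α) * -(α:K)) = 0 := by
    rw [sub_mul, sub_mul, HahnSeries.coeff_sub, HahnSeries.coeff_sub, p1, p2, p3] at h0
    exact h0
  linear_combination hfinal
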